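/- For a block deletion of d consecutive symbols from a sequence of length n, the deinterleaved subsequences each lose exactly one symbol, and the positions of the deleted symbols within the subsequences form a two-valued nonincreasing pattern: if the block of deleted positions is {p*, p*+1, ..., p*+d−1} and the k-th subsequence consists of positions k, k+d, k+2d, ..., then the index of the deleted position within subsequence k takes some value j for k < k₀ and j−1 for k ≥ k₀ (for a unique threshold k₀), or is constant; moreover p* = (j−1)d + 1 if the pattern is constant, and p* = (j−2)d + k₀ otherwise. -/
import Mathlib


/-- For a block deletion of `d` consecutive positions `{p, …, p+d−1}` from a sequence
of length `n` (with `d ∣ n`), deinterleaved into `d` subsequences (the `k`-th taking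
positions `k, k+d, k+2d, …`): each subsequence loses exactly one position, and if
`q k` denotes the (1-based) index within subsequence `k` of its deleted position,
then either `q` is constant, equal to `j = q 1`, and `p = (j−1)d + 1`, or there is a
unique threshold `k₀` with `2 ≤ k₀ ≤ d` such that `q k = j` for `k < k₀` and
`q k = j − 1` for `k ≥ k₀`, and `p = (j−2)d + k₀`. -/
theorem block_deletion_deinterleaving (n d p : ℕ) (q : ℕ → ℕ)
    (hd : 0 < d) (hdn : d ∣ n) (hp : 1 ≤ p) (hpn : p + d - 1 ≤ n)
    (hq : ∀ k, 1 ≤ k → k ≤ d →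
      1 ≤ q k ∧ q k ≤ n / d ∧ p ≤ k + (q k - 1) * d ∧ k + (q k - 1) * d ≤ p + d - 1) :
    (∀ k, 1 ≤ k → k ≤ d →
      ∃! m, 1 ≤ m ∧ m ≤ n / d ∧ p ≤ k + (m - 1) * d ∧ k + (m - 1) * d ≤ p + d - 1) ∧
    (((∀ k, 1 ≤ k → k ≤ d → q k = q 1) ∧ p = (q 1 - 1) * d + 1) ∨
      (∃! k₀, 2 ≤ k₀ ∧ k₀ ≤ d ∧ (∀ k, 1 ≤ k → k < k₀ → q k = q 1) ∧
        (∀ k, k₀ ≤ k → k ≤ d → q k = q 1 - 1) ∧ p = (q 1 - 2) * d + k₀)) := by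
  obtain ⟨a, r, hr, hx⟩ : ∃ a r, r < d ∧ p = a * d + r + 1 := by
    refine ⟨(p - 1) / d, (p - 1) % d, Nat.mod_lt _ hd, ?_⟩
    have h := Nat.div_add_mod (p - 1) d
    rw [Nat.mul_comm]
    omega
  have hnd : n / d * d = n := Nat.div_mul_cancel hdn
  -- uniqueness of multiplier in a window of length d
  have uniq : ∀ b c k : ℕ, p ≤ k + b * d → k + b * d ≤ p + d - 1 →
      p ≤ k + c * d → k + c * d ≤ p + d - 1 → b = c := by
    intro b c k h1 h2 h3 h4
    have e1 : (b + 1) * d = b * d + d := by ring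
    have e2 : (c + 1) * d = c * d + d := by ring
    have h5 : c * d < (b + 1) * d := by omega
    have h6 : b * d < (c + 1) * d := by omega
    have := Nat.lt_of_mul_lt_mul_right h5
    have := Nat.lt_of_mul_lt_mul_right h6
    omega
  -- the canonical value satisfies the constraints
  have sat : ∀ k, 1 ≤ k → k ≤ d →
      (1 ≤ (if k ≤ r then a + 2 else a + 1) ∧ (if k ≤ r then a + 2 else a + 1) ≤ n / d ∧
       p ≤ k + ((if k ≤ r then a + 2 else a + 1) - 1) * d ∧
       k + ((if k ≤ r then a + 2 else a + 1) - 1) * d ≤ p + d - 1) := by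
    intro k hk1 hk2
    by_cases hkr : k ≤ r
    · simp only [if_pos hkr]
      have e1 : (a + 2 - 1) * d = a * d + d := by
        have h : a + 2 - 1 = a + 1 := by omega
        rw [h]; ring
      have hlt : (a + 1) * d < n / d * d := by
        have e2 : (a + 1) * d = a * d + d := by ring
        omega
      have := Nat.lt_of_mul_lt_mul_right hlt
      refine ⟨by omega, by omega, by omega, by omega⟩
    · simp only [if_neg hkr]
      have e1 : (a + 1 - 1) * d = a * d := by
        have h : a + 1 - 1 = a := by omega
        rw [h]
      have hlt : a * d < n / d * d := by omega
      have := Nat.lt_of_mul_lt_mul_right hlt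
      refine ⟨by omega, by omega, by omega, by omega⟩
  -- q agrees with the canonical value
  have key : ∀ k, 1 ≤ k → k ≤ d → q k = if k ≤ r then a + 2 else a + 1 := by
    intro k hk1 hk2
    obtain ⟨hq1, hq2, hq3, hq4⟩ := hq k hk1 hk2
    obtain ⟨hs1, hs2, hs3, hs4⟩ := sat k hk1 hk2
    have := uniq (q k - 1) ((if k ≤ r then a + 2 else a + 1) - 1) k hq3 hq4 hs3 hs4
    omega
  constructor
  · intro k hk1 hk2
    exact ⟨(if k ≤ r then a + 2 else a + 1), sat k hk1 hk2, fun m hm => by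
      have := uniq (m - 1) ((if k ≤ r then a + 2 else a + 1) - 1) k hm.2.2.1 hm.2.2.2
        (sat k hk1 hk2).2.2.1 (sat k hk1 hk2).2.2.2
      have := (sat k hk1 hk2).1
      omega⟩
  · have hq1d : q 1 = if 1 ≤ r then a + 2 else a + 1 := key 1 le_rfl hd
    by_cases hr0 : r = 0
    · left
      have hq1 : q 1 = a + 1 := by rw [hq1d, if_neg (by omega)]
      constructor
      · intro k hk1 hk2
        rw [key k hk1 hk2, hq1, if_neg (by omega)]
      · rw [hq1]
        have h : a + 1 - 1 = a := by omega
        rw [h]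
        omega
    · right
      have hq1 : q 1 = a + 2 := by rw [hq1d, if_pos (by omega)]
      have e2 : (a + 2 - 2) * d = a * d := by
        have h : a + 2 - 2 = a := by omega
        rw [h]
      refine ⟨r + 1, ⟨by omega, by omega, ?_, ?_, by rw [hq1]; omega⟩, ?_⟩
      · intro k hk1 hk2
        rw [key k hk1 (by omega), hq1, if_pos (by omega)]
      · intro k hk1 hk2
        rw [key k (by omega) hk2, hq1, if_neg (by omega)]
        omega
      · rintro k₀' ⟨h1, h2, h3, h4, h5⟩
        rw [hq1] at h5
        omega
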